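/- For every k ≥ 2 and r ≥ 2, Λ_r(k) ≥ k - r, where Λ_r(k) is the minimum over all K_{r+1}-free graphs H with clique number exactly r and chromatic number at least k of the quantity (r-1)|V(H)| minus the maximum over r-cliques C of H of the sum of degrees of the vertices in C. -/

import Mathlib

/-- `Λ_r(H)`: `(r-1)|V(H)|` minus the maximum, over `r`-cliques `C` of `H`, of the sum of
the degrees of the vertices of `C`. -/
noncomputable def lamGraph (r : ℕ) {n : ℕ} (H : SimpleGraph (Fin n)) : ℕ :=
  (r - 1) * n -
    sSup {d : ℕ | ∃ C : Finset (Fin n), H.IsNClique r C ∧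
      d = ∑ v ∈ C, (H.neighborSet v).ncard}

/-- `Λ_r(k)`: the minimum of `Λ_r(H)` over graphs `H` with clique number exactly `r`
and chromatic number at least `k`. -/
noncomputable def lam (r k : ℕ) : ℕ :=
  sInf {L : ℕ | ∃ n : ℕ, ∃ H : SimpleGraph (Fin n), H.CliqueFree (r + 1) ∧
    (∃ C : Finset (Fin n), H.IsNClique r C) ∧ (k : ℕ∞) ≤ H.chromaticNumber ∧
    L = lamGraph r H}

open SimpleGraph Finset

/-- The shift graph on pairs from `Fin N`. -/
def shiftG (N : ℕ) : SimpleGraph (Fin N × Fin N) where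
  Adj p q := (p.1 < p.2 ∧ q.1 < q.2) ∧ (p.2 = q.1 ∨ q.2 = p.1)
  symm := by
    refine ⟨?_⟩
    rintro p q ⟨⟨h1, h2⟩, h3⟩
    exact ⟨⟨h2, h1⟩, h3.symm⟩
  loopless := by
    refine ⟨?_⟩
    rintro p ⟨⟨h1, _⟩, (h | h)⟩ <;> exact absurd h1 (by rw [h]; exact lt_irrefl _)

lemma shift_no_triangle {N : ℕ} {p q w : Fin N × Fin N}
    (h1 : (shiftG N).Adj p q) (h2 : (shiftG N).Adj q w) (h3 : (shiftG N).Adj p w) : False := by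
  obtain ⟨⟨hp, hq⟩, h1⟩ := h1
  obtain ⟨⟨_, hw⟩, h2⟩ := h2
  obtain ⟨_, h3⟩ := h3
  simp only [Fin.lt_def, Fin.ext_iff] at hp hq hw h1 h2 h3
  omega

lemma shift_chrom {N m : ℕ} (hcol : (shiftG N).Colorable m) : N ≤ 2 ^ m := by
  classical
  obtain ⟨C⟩ := hcol
  set S : Fin N → Finset (Fin m) :=
    fun i => univ.filter (fun c => ∃ j, i < j ∧ C (i, j) = c) with hSdef
  have hlt_ne : ∀ i i' : Fin N, i < i' → S i ≠ S i' := by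
    intro i i' hlt hS
    have hmem : C (i, i') ∈ S i := by
      simp only [hSdef, mem_filter, mem_univ, true_and]
      exact ⟨i', hlt, rfl⟩
    rw [hS] at hmem
    simp only [hSdef, mem_filter, mem_univ, true_and] at hmem
    obtain ⟨j, hj, hcj⟩ := hmem
    have hadj : (shiftG N).Adj (i, i') (i', j) := ⟨⟨hlt, hj⟩, Or.inl rfl⟩
    exact C.valid hadj hcj.symm
  have hinj : Function.Injective S := by
    intro i i' hS
    by_contra hne
    rcases lt_or_gt_of_ne hne with h | h
    · exact hlt_ne i i' h hS
    · exact hlt_ne i' i h hS.symm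
  calc N = Fintype.card (Fin N) := (Fintype.card_fin N).symm
    _ ≤ Fintype.card (Finset (Fin m)) := Fintype.card_le_of_injective S hinj
    _ = 2 ^ m := by rw [Fintype.card_finset, Fintype.card_fin]

/-- Disjoint union of `K_r` and the shift graph. -/
def bigG (r N : ℕ) : SimpleGraph (Fin r ⊕ Fin N × Fin N) where
  Adj x y := match x, y with
    | Sum.inl a, Sum.inl b => a ≠ b
    | Sum.inr p, Sum.inr q => (shiftG N).Adj p q
    | _, _ => False
  symm := by
    refine ⟨?_⟩
    rintro (a | p) (b | q) h
    · exact Ne.symm h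
    · exact h.elim
    · exact h.elim
    · exact h.symm
  loopless := by
    refine ⟨?_⟩
    rintro (a | p) h
    · exact h rfl
    · exact (shiftG N).loopless.irrefl p h

lemma bigG_cliqueFree (r N : ℕ) (hr : 2 ≤ r) : (bigG r N).CliqueFree (r + 1) := by
  classical
  intro s hs
  by_cases hR : ∃ p, Sum.inr p ∈ s
  · obtain ⟨p, hp⟩ := hR
    -- every element of s is inr
    have hallR : ∀ x ∈ s, ∃ q, x = Sum.inr q := by
      intro x hx
      cases x with
      | inl a =>
        exact absurd (hs.1 hx hp (by simp)) (fun h => h)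
      | inr q => exact ⟨q, rfl⟩
    have h3 : 3 ≤ s.card := by rw [hs.2]; omega
    obtain ⟨t, hts, ht3⟩ := Finset.exists_subset_card_eq h3
    obtain ⟨x, y, z, hxy, hxz, hyz, rfl⟩ := Finset.card_eq_three.mp ht3
    have hx : x ∈ s := hts (by simp)
    have hy : y ∈ s := hts (by simp)
    have hz : z ∈ s := hts (by simp)
    obtain ⟨px, rfl⟩ := hallR x hx
    obtain ⟨py, rfl⟩ := hallR y hy
    obtain ⟨pz, rfl⟩ := hallR z hz
    exact shift_no_triangle (hs.1 hx hy hxy) (hs.1 hy hz hyz) (hs.1 hx hz hxz)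
  · have hallL : ∀ x ∈ s, ∃ a, x = Sum.inl a := by
      intro x hx
      cases x with
      | inl a => exact ⟨a, rfl⟩
      | inr p => exact absurd ⟨p, hx⟩ hR
    have hsub : s ⊆ (univ : Finset (Fin r)).image (Sum.inl : Fin r → Fin r ⊕ Fin N × Fin N) := by
      intro x hx
      obtain ⟨a, rfl⟩ := hallL x hx
      simp
    have h1 := Finset.card_le_card hsub
    have h2 : ((univ : Finset (Fin r)).image (Sum.inl : Fin r → Fin r ⊕ Fin N × Fin N)).card ≤ r :=
      le_trans Finset.card_image_le (by simp)
    rw [hs.2] at h1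
    omega

lemma bigG_clique (r N : ℕ) :
    (bigG r N).IsNClique r ((univ : Finset (Fin r)).map ⟨Sum.inl, Sum.inl_injective⟩) := by
  constructor
  · intro x hx y hy hne
    simp only [coe_map, Set.mem_image, mem_coe] at hx hy
    obtain ⟨a, -, rfl⟩ := hx
    obtain ⟨b, -, rfl⟩ := hy
    exact fun h => hne (by rw [h])
  · simp

lemma exists_graph (k r : ℕ) (hk : 2 ≤ k) (hr : 2 ≤ r) :
    ∃ n : ℕ, ∃ H : SimpleGraph (Fin n), H.CliqueFree (r + 1) ∧
      (∃ C : Finset (Fin n), H.IsNClique r C) ∧ (k : ℕ∞) ≤ H.chromaticNumber := by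
  classical
  set N : ℕ := 2 ^ (k - 1) + 1 with hN
  haveI : Nonempty (Fin r ⊕ Fin N × Fin N) := ⟨Sum.inl ⟨0, by omega⟩⟩
  set V := Fin r ⊕ Fin N × Fin N
  set e : V ≃ Fin (Fintype.card V) := Fintype.equivFin V with he
  refine ⟨Fintype.card V, (bigG r N).map e.toEmbedding, ?_, ?_, ?_⟩
  · exact (cliqueFree_map_iff).mpr (bigG_cliqueFree r N hr)
  · exact ⟨_, (bigG_clique r N).map (f := e.toEmbedding)⟩
  · have key : ∀ m : ℕ, ((bigG r N).map e.toEmbedding).Colorable m → k ≤ m := by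
      intro m ⟨C⟩
      have hc : (shiftG N).Colorable m := by
        refine ⟨Coloring.mk (fun p => C (e.toEmbedding (Sum.inr p))) ?_⟩
        intro p q h
        exact C.valid ⟨e.toEmbedding.injective.ne (Sum.inr_injective.ne h.ne), Sum.inr p, Sum.inr q, h, rfl, rfl⟩
      have hNle := shift_chrom hc
      by_contra hm
      push_neg at hm
      have : (2 : ℕ) ^ m ≤ 2 ^ (k - 1) := Nat.pow_le_pow_right (by norm_num) (by omega)
      omega
    rw [SimpleGraph.chromaticNumber]
    refine le_iInf₂ fun m hm => ?_
    exact_mod_cast key m hm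

lemma bound_forall {n r k : ℕ} (hr : 2 ≤ r) (H : SimpleGraph (Fin n))
    (hfree : H.CliqueFree (r + 1)) (hchrom : (k : ℕ∞) ≤ H.chromaticNumber)
    {C : Finset (Fin n)} (hC : H.IsNClique r C) :
    (∑ v ∈ C, (H.neighborSet v).ncard) + (k - r) ≤ (r - 1) * n := by
  classical
  set dC : Fin n → ℕ := fun u => (C.filter (fun v => H.Adj v u)).card with hdC
  -- double counting
  have hA : ∑ v ∈ C, (H.neighborSet v).ncard = ∑ u : Fin n, dC u := by
    have h1 : ∀ v : Fin n, (H.neighborSet v).ncard = (univ.filter (H.Adj v)).card := by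
      intro v
      rw [show H.neighborSet v = ↑(univ.filter (H.Adj v)) by ext w; simp,
        Set.ncard_coe_finset]
    simp_rw [h1, hdC, Finset.card_filter]
    exact Finset.sum_comm
  -- each vertex sees at most r-1 clique vertices
  have hdle : ∀ u, dC u ≤ r - 1 := by
    intro u
    by_contra hlt
    push_neg at hlt
    simp only [hdC] at hlt
    have hsub : C.filter (fun v => H.Adj v u) ⊆ C := Finset.filter_subset _ _
    have heq : C.filter (fun v => H.Adj v u) = C :=
      Finset.eq_of_subset_of_card_le hsub (by rw [hC.2]; omega)
    have hadj : ∀ v ∈ C, H.Adj v u := by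
      intro v hv
      rw [← heq] at hv
      exact (Finset.mem_filter.mp hv).2
    exact hfree _ (hC.insert (fun b hb => (hadj b hb).symm))
  set T : Finset (Fin n) := univ.filter (fun u => dC u < r - 1) with hT
  have hcard' : ∀ u, u ∉ T → dC u = r - 1 := by
    intro u hu
    have h1 := hdle u
    simp only [hT, Finset.mem_filter, Finset.mem_univ, true_and, not_lt] at hu
    omega
  -- the missing clique vertex for each saturated vertex
  have hg : ∀ u : Fin n, dC u = r - 1 → ∃ c, C \ C.filter (fun v => H.Adj v u) = {c} := by
    intro u hu
    simp only [hdC] at hu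
    rw [← Finset.card_eq_one, Finset.card_sdiff_of_subset (Finset.filter_subset _ _), hC.2, hu]
    omega
  choose g hgspec using hg
  have gmem : ∀ u (h : dC u = r - 1), g u h ∈ C := by
    intro u h
    have : g u h ∈ C \ C.filter (fun v => H.Adj v u) := by
      rw [hgspec u h]; exact Finset.mem_singleton_self _
    exact (Finset.mem_sdiff.mp this).1
  have gadj : ∀ u (h : dC u = r - 1), ∀ v ∈ C, v ≠ g u h → H.Adj v u := by
    intro u h v hv hne
    by_contra hnadj
    have : v ∈ C \ C.filter (fun w => H.Adj w u) :=
      Finset.mem_sdiff.mpr ⟨hv, fun hm => hnadj (Finset.mem_filter.mp hm).2⟩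
    rw [hgspec u h] at this
    exact hne (Finset.mem_singleton.mp this)
  have gself : ∀ u (h : dC u = r - 1), u ∈ C → g u h = u := by
    intro u h hu
    have : u ∈ C \ C.filter (fun v => H.Adj v u) :=
      Finset.mem_sdiff.mpr ⟨hu, fun hm => H.loopless.irrefl u (Finset.mem_filter.mp hm).2⟩
    rw [hgspec u h] at this
    exact (Finset.mem_singleton.mp this).symm
  -- build a proper coloring with C ⊕ T colors
  let f : Fin n → (↥C ⊕ ↥T) := fun u =>
    if h : u ∈ T then Sum.inr ⟨u, h⟩
    else Sum.inl ⟨g u (hcard' u h), gmem u (hcard' u h)⟩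
  have hvalid : ∀ {a b : Fin n}, H.Adj a b → f a ≠ f b := by
    intro a b hab
    by_cases ha : a ∈ T <;> by_cases hb : b ∈ T <;>
      simp only [f, ha, hb, dif_pos, dif_neg, not_false_iff]
    · intro h
      exact hab.ne (Subtype.mk_eq_mk.mp (Sum.inr_injective h))
    · exact fun h => by simp at h
    · exact fun h => by simp at h
    · intro h
      have hgab : g a (hcard' a ha) = g b (hcard' b hb) :=
        Subtype.mk_eq_mk.mp (Sum.inl_injective h)
      have hcC : g b (hcard' b hb) ∈ C := gmem b (hcard' b hb)
      by_cases haC : a ∈ C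
      · have hac : a = g b (hcard' b hb) := by
          rw [← hgab]; exact (gself a (hcard' a ha) haC).symm
        by_cases hbC : b ∈ C
        · have hbc : b = g b (hcard' b hb) := (gself b (hcard' b hb) hbC).symm
          exact hab.ne (hac.trans hbc.symm)
        · have hall : ∀ v ∈ C, H.Adj v b := by
            intro v hv
            by_cases hvc : v = g b (hcard' b hb)
            · rw [hvc, ← hac]; exact hab
            · exact gadj b (hcard' b hb) v hv hvc
          have heqf : C.filter (fun v => H.Adj v b) = C := Finset.filter_eq_self.mpr hall
          have h2 := hcard' b hb
          simp only [hdC] at h2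
          rw [heqf, hC.2] at h2
          omega
      · by_cases hbC : b ∈ C
        · have hbc : b = g b (hcard' b hb) := (gself b (hcard' b hb) hbC).symm
          have hall : ∀ v ∈ C, H.Adj v a := by
            intro v hv
            by_cases hvc : v = g a (hcard' a ha)
            · rw [hvc, hgab, ← hbc]; exact hab.symm
            · exact gadj a (hcard' a ha) v hv hvc
          have heqf : C.filter (fun v => H.Adj v a) = C := Finset.filter_eq_self.mpr hall
          have h2 := hcard' a ha
          simp only [hdC] at h2
          rw [heqf, hC.2] at h2
          omega
        · -- both outside C : build an (r+1)-clique
          have hbase : H.IsNClique (r - 1) (C.erase (g b (hcard' b hb))) := by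
            constructor
            · exact hC.1.subset (by simp [Finset.erase_subset, Finset.coe_subset])
            · rw [Finset.card_erase_of_mem hcC, hC.2]
          have hb' : H.IsNClique (r - 1 + 1) (insert b (C.erase (g b (hcard' b hb)))) := by
            refine hbase.insert ?_
            intro w hw
            obtain ⟨hwc, hwC⟩ := Finset.mem_erase.mp hw
            exact (gadj b (hcard' b hb) w hwC hwc).symm
          have ha' : H.IsNClique (r - 1 + 1 + 1)
              (insert a (insert b (C.erase (g b (hcard' b hb))))) := by
            refine hb'.insert ?_
            intro w hw
            rcases Finset.mem_insert.mp hw with rfl | hw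
            · exact hab
            · obtain ⟨hwc, hwC⟩ := Finset.mem_erase.mp hw
              exact (gadj a (hcard' a ha) w hwC (fun e => hwc (hgab ▸ e))).symm
          have hrr : r - 1 + 1 + 1 = r + 1 := by omega
          rw [hrr] at ha'
          exact hfree _ ha'
  have coloring : H.Coloring (↥C ⊕ ↥T) := Coloring.mk f hvalid
  have hcolorable : H.Colorable (r + T.card) := by
    have hcardeq : Fintype.card (↥C ⊕ ↥T) = r + T.card := by
      rw [Fintype.card_sum, Fintype.card_coe, Fintype.card_coe, hC.2]
    exact hcardeq ▸ coloring.colorable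
  have hk2 : k ≤ r + T.card := by
    have h1 := hcolorable.chromaticNumber_le
    have h2 := le_trans hchrom h1
    exact_mod_cast h2
  -- final counting
  have hsum : (∑ u : Fin n, dC u) + T.card ≤ (r - 1) * n := by
    have hTcard : T.card = ∑ u : Fin n, (if dC u < r - 1 then 1 else 0) := by
      rw [hT, Finset.card_filter]
    calc (∑ u : Fin n, dC u) + T.card
        = ∑ u : Fin n, (dC u + if dC u < r - 1 then 1 else 0) := by
          rw [Finset.sum_add_distrib, hTcard]
      _ ≤ ∑ _u : Fin n, (r - 1) := by
          refine Finset.sum_le_sum fun u _ => ?_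
          have := hdle u
          by_cases h : dC u < r - 1 <;> simp [h] <;> omega
      _ = (r - 1) * n := by
          rw [Finset.sum_const, Finset.card_univ, Fintype.card_fin, smul_eq_mul,
            Nat.mul_comm]
  rw [hA]
  omega

theorem lam_lower_bound (k r : ℕ) (hk : 2 ≤ k) (hr : 2 ≤ r) :
    k - r ≤ lam r k := by
  classical
  obtain ⟨n0, H0, hfree0, hclq0, hchrom0⟩ := exists_graph k r hk hr
  rw [lam]
  refine le_csInf ⟨lamGraph r H0, n0, H0, hfree0, hclq0, hchrom0, rfl⟩ ?_
  rintro L ⟨n, H, hfree, ⟨C, hC⟩, hchrom, rfl⟩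
  rw [lamGraph]
  set D := {d : ℕ | ∃ C : Finset (Fin n), H.IsNClique r C ∧
    d = ∑ v ∈ C, (H.neighborSet v).ncard} with hD
  have key : ∀ d ∈ D, d + (k - r) ≤ (r - 1) * n := by
    rintro d ⟨C', hC', rfl⟩
    exact bound_forall hr H hfree hchrom hC'
  have hne : D.Nonempty := ⟨_, C, hC, rfl⟩
  have h2 : k - r ≤ (r - 1) * n := by
    obtain ⟨d0, hd0⟩ := hne
    have := key d0 hd0
    omega
  have h1 : sSup D ≤ (r - 1) * n - (k - r) :=
    csSup_le hne fun d hd => Nat.le_sub_of_add_le (key d hd)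
  calc k - r = (r - 1) * n - ((r - 1) * n - (k - r)) := (Nat.sub_sub_self h2).symm
    _ ≤ (r - 1) * n - sSup D := Nat.sub_le_sub_left h1 _
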